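/- Let v̂ ∈ ℝ^d \ {0}, f̂ ∈ ℝ, and nodes x_i, x_j ∈ ℝ^d. Set u_i = f̂ (x_i·v̂)/|v̂|², u_j = f̂ (x_j·v̂)/|v̂|², and s_i = s_j = f̂. Then the balancing flux P_ij = (1/2)·((s_i+s_j)/2)·((x_i − x_j)·(v(x_i)+v(x_j))) / (2·max{|v(x_i)|,|v(x_j)|}²), with constant velocity v(x) = v̂, equals (u_i − u_j)/2. -/

import Mathlib

theorem balancing_flux_at_equilibrium (d : ℕ) (v : EuclideanSpace ℝ (Fin d)) (hv : v ≠ 0)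
    (fhat : ℝ) (xi xj : EuclideanSpace ℝ (Fin d))
    (ui uj si sj Pij : ℝ)
    (hui : ui = fhat * (inner ℝ xi v : ℝ) / ‖v‖ ^ 2)
    (huj : uj = fhat * (inner ℝ xj v : ℝ) / ‖v‖ ^ 2)
    (hsi : si = fhat) (hsj : sj = fhat)
    (hP : Pij = (1 / 2) * ((si + sj) / 2) * (inner ℝ (xi - xj) (v + v) : ℝ) /
      (2 * (max ‖v‖ ‖v‖) ^ 2)) :
    Pij = (ui - uj) / 2 := by
  have hn : ‖v‖ ≠ 0 := norm_ne_zero_iff.mpr hv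
  subst hui huj hsi hsj hP
  have h2 : (inner ℝ (xi - xj) (v + v) : ℝ) = 2 * ((inner ℝ xi v : ℝ) - inner ℝ xj v) := by
    simp [inner_sub_left, inner_add_right]; ring
  rw [max_self, h2]
  field_simp
  ring
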